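/- Let R be a commutative ring and A an m×m skew-symmetric matrix over R (Aᵀ = -A, diagonal zero) with m ≥ 2, A₁₂ = 1 and A₂₁ = -1. Define the (m-2)×(m-2) matrix à by Ã_{ij} = A_{i+2,j+2} - A_{2,j+2}·A_{1,i+2} + A_{1,j+2}·A_{2,i+2}. Then à is skew-symmetric with zero diagonal, and det(A) = det(Ã). -/

import Mathlib

open Matrix

theorem skew_reduction_step {R : Type*} [CommRing R] {m : ℕ}
    (A : Matrix (Fin (m + 2)) (Fin (m + 2)) R)
    (hA : Aᵀ = -A) (hdiag : ∀ i, A i i = 0)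
    (h01 : A 0 1 = 1) (h10 : A 1 0 = -1)
    (At : Matrix (Fin m) (Fin m) R)
    (hAt : ∀ i j, At i j =
      A i.succ.succ j.succ.succ - A 1 j.succ.succ * A 0 i.succ.succ
        + A 0 j.succ.succ * A 1 i.succ.succ) :
    Atᵀ = -At ∧ (∀ i, At i i = 0) ∧ A.det = At.det := by
  have hskew : ∀ i j, A j i = - A i j := by
    intro i j
    have := congrFun (congrFun hA i) j
    simpa using this
  refine ⟨?_, ?_, ?_⟩
  · ext i j
    simp only [transpose_apply, Matrix.neg_apply, hAt]
    linear_combination hskew i.succ.succ j.succ.succ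
  · intro i
    rw [hAt, hdiag]
    ring
  · -- det part
    set e : Fin 2 ⊕ Fin m ≃ Fin (m + 2) :=
      finSumFinEquiv.trans (finCongr (Nat.add_comm 2 m)) with he
    have he0 : e (Sum.inl 0) = 0 := by
      apply Fin.ext; simp [he, finSumFinEquiv, finCongr]
    have he1 : e (Sum.inl 1) = 1 := by
      apply Fin.ext; simp [he, finSumFinEquiv, finCongr]
    have he2 : ∀ j : Fin m, e (Sum.inr j) = j.succ.succ := by
      intro j; apply Fin.ext; simp [he, finSumFinEquiv, finCongr]
    set M : Matrix (Fin 2 ⊕ Fin m) (Fin 2 ⊕ Fin m) R := A.submatrix e e with hMdef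
    set r : Fin 2 → Fin (m + 2) := ![0, 1] with hr
    have her : ∀ a : Fin 2, e (Sum.inl a) = r a := by
      intro a; fin_cases a <;> simp [hr, he0, he1]
    have hM : M = fromBlocks (Matrix.of fun a b => A (r a) (r b))
        (Matrix.of fun a j => A (r a) j.succ.succ)
        (Matrix.of fun i b => A i.succ.succ (r b))
        (Matrix.of fun i j => A i.succ.succ j.succ.succ) := by
      ext (a | i) (b | j) <;>
        simp [hMdef, fromBlocks, submatrix, her, he2]
    set C : Matrix (Fin m) (Fin 2) R :=
      Matrix.of fun i k => if k = 0 then A 1 i.succ.succ else -(A 0 i.succ.succ) with hC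
    set E : Matrix (Fin 2 ⊕ Fin m) (Fin 2 ⊕ Fin m) R := fromBlocks 1 0 C 1 with hE
    set P : Matrix (Fin 2) (Fin 2) R := !![0, 1; -1, 0] with hP
    have key : E * M * Eᵀ = fromBlocks P 0 0 At := by
      rw [hE, hM, Matrix.fromBlocks_transpose, Matrix.fromBlocks_multiply,
        Matrix.fromBlocks_multiply]
      ext x y
      rcases x with a | i <;> rcases y with b | j
      · fin_cases a <;> fin_cases b <;>
          simp [hP, hr, fromBlocks, mul_apply, Fin.sum_univ_two, hdiag, h01, h10, hC,
            transpose_apply]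
      · fin_cases a <;>
          simp [hr, fromBlocks, mul_apply, Fin.sum_univ_two, hC, transpose_apply,
            hdiag, h01, h10]
        all_goals first
          | linear_combination hskew 0 j.succ.succ
          | linear_combination hskew 1 j.succ.succ
      · fin_cases b <;>
          simp [hr, fromBlocks, mul_apply, Fin.sum_univ_two, hC, transpose_apply,
            hdiag, h01, h10]
        all_goals first
          | linear_combination hskew 0 i.succ.succ
          | linear_combination hskew 1 i.succ.succ
      · simp [hr, fromBlocks, mul_apply, Fin.sum_univ_two, hC, transpose_apply,
          hdiag, h01, h10, hAt]
        linear_combination (A 1 j.succ.succ) * hskew 0 i.succ.succ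
          - (A 0 j.succ.succ) * hskew 1 i.succ.succ
    have hdetE : E.det = 1 := by
      rw [hE, Matrix.det_fromBlocks_zero₁₂]; simp
    have hdetM : M.det = A.det := Matrix.det_submatrix_equiv_self e A
    have := congrArg Matrix.det key
    rw [Matrix.det_mul, Matrix.det_mul, hdetE, Matrix.det_transpose, hdetE,
      hdetM, Matrix.det_fromBlocks_zero₂₁, one_mul, mul_one] at this
    rw [this, hP]
    simp [Matrix.det_fin_two_of]
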